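/- There exists a rectangle-free coloring χ : Fin 30 × Fin 25 → Fin 5 of the 30×25 grid with 5 colors. -/

import Mathlib

/-- A coloring of a grid is rectangle-free if no four corners of an axis-aligned
rectangle get the same color. -/
def IsRectFree {α β γ : Type*} (χ : α × β → γ) : Prop :=
  ∀ i₁ i₂ : α, ∀ j₁ j₂ : β, i₁ ≠ i₂ → j₁ ≠ j₂ →
    ¬ (χ (i₁, j₁) = χ (i₁, j₂) ∧ χ (i₁, j₁) = χ (i₂, j₁) ∧ χ (i₁, j₁) = χ (i₂, j₂))

theorem grid_cell_lt {x z a i : ℕ} (ha : a < x) (hi : i < z) : a * z + i < x * z := by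
  calc a * z + i < a * z + z := by omega
    _ = (a + 1) * z := by ring
    _ ≤ x * z := Nat.mul_le_mul_right z ha

theorem grid_row_lt {x z a : ℕ} (ha : a < x) (hz : 0 < z) : a * z < x * z := by
  have := grid_cell_lt ha hz; omega

/-- `χ` has the right-shift pattern on `z`-subgrids: within each `z × z` subgrid,
row `i` is the first row of the subgrid shifted right by `i` with wraparound,
i.e. `χ (a*z + i, b*z + j) = χ (a*z, b*z + ((j - i) mod z))`. -/
def HasShiftPattern (x y z k : ℕ) (χ : Fin (x*z) × Fin (y*z) → Fin k) : Prop :=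
  ∀ (a b i j : ℕ) (ha : a < x) (hb : b < y) (hi : i < z) (hj : j < z),
    χ (⟨a*z + i, grid_cell_lt ha hi⟩, ⟨b*z + j, grid_cell_lt hb hj⟩) =
    χ (⟨a*z, grid_row_lt ha (Nat.lt_of_le_of_lt (Nat.zero_le i) hi)⟩,
       ⟨b*z + (z + j - i) % z,
        grid_cell_lt hb (Nat.mod_lt _ (Nat.lt_of_le_of_lt (Nat.zero_le i) hi))⟩)

/-- `vcount χ c a b _ _ _` is the number of occurrences of color `c` in the first
row of the subgrid `(a, b)`. -/
def vcount {x y z k : ℕ} (χ : Fin (x*z) × Fin (y*z) → Fin k) (c : Fin k)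
    (a b : ℕ) (ha : a < x) (hb : b < y) (hz : 0 < z) : ℕ :=
  (Finset.univ.filter (fun j : Fin z =>
    χ (⟨a*z, grid_row_lt ha hz⟩, ⟨b*z + (j : ℕ), grid_cell_lt hb j.isLt⟩) = c)).card

/-- injectivity of casting small naturals into `ZMod 5` -/
lemma cinj {a b : ℕ} (ha : a < 5) (hb : b < 5) (h : (a : ZMod 5) = (b : ZMod 5)) : a = b := by
  have := congrArg ZMod.val h
  rw [ZMod.val_natCast, ZMod.val_natCast] at this
  omega

/-- same, but comparing residues mod 5 -/
lemma cinj' {a b : ℕ} (h : (a : ZMod 5) = (b : ZMod 5)) : a % 5 = b % 5 := by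
  have := congrArg ZMod.val h
  rwa [ZMod.val_natCast, ZMod.val_natCast] at this

def χ0 : Fin 30 × Fin 25 → ZMod 5 := fun p =>
  if p.1.val / 5 = 5 then
    ((p.2.val / 5 : ℕ) : ZMod 5) - ((p.1.val : ℕ) : ZMod 5)
  else
    ((p.2.val : ℕ) : ZMod 5) - ((p.1.val / 5 : ℕ) : ZMod 5) * ((p.2.val / 5 : ℕ) : ZMod 5)
      - ((p.1.val : ℕ) : ZMod 5)

instance : Fact (Nat.Prime 5) := ⟨by norm_num⟩

theorem stmt_16 :
    ∃ χ : Fin 30 × Fin 25 → Fin 5, IsRectFree χ := by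
  refine ⟨χ0, (?_ : IsRectFree (γ := ZMod 5) χ0)⟩
  rintro i1 i2 j1 j2 hi hj ⟨e1, e2, e3⟩
  simp only [χ0] at e1 e2 e3
  have hx1 : j1.val / 5 < 5 := by clear e1 e2 e3; omega
  have hx2 : j2.val / 5 < 5 := by clear e1 e2 e3; omega
  -- abbreviations
  set m1 := i1.val / 5 with hm1def
  set m2 := i2.val / 5 with hm2def
  have hjeq : j1.val / 5 = j2.val / 5 → j1.val % 5 = j2.val % 5 → False := by
    intro h1 h2; exact hj (Fin.ext (by clear e1 e2 e3; omega))
  have hieq : m1 = m2 → i1.val % 5 = i2.val % 5 → False := by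
    intro h1 h2; exact hi (Fin.ext (by clear e1 e2 e3; omega))
  by_cases h1 : m1 = 5 <;> by_cases h2 : m2 = 5 <;>
    simp only [h1, h2, if_pos, if_neg, if_true, if_false] at e1 e2 e3
  · -- both vertical
    have hx : j1.val / 5 = j2.val / 5 := cinj hx1 hx2 (by linear_combination e1)
    have hs : i1.val % 5 = i2.val % 5 := cinj' (show ((i1.val:ℕ):ZMod 5) = _ by
      linear_combination -e2)
    exact hieq (h1.trans h2.symm) hs
  · -- m1 vertical, m2 not
    have hx : j1.val / 5 = j2.val / 5 := cinj hx1 hx2 (by linear_combination e1)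
    have hy : (j1.val : ZMod 5) = (j2.val : ZMod 5) := by
      have hxc : ((j1.val / 5 : ℕ) : ZMod 5) = ((j2.val / 5 : ℕ) : ZMod 5) := by rw [hx]
      linear_combination e3 - e2 + (m2 : ZMod 5) * hxc
    exact hjeq hx (cinj' hy)
  · -- m2 vertical, m1 not
    have hx : j1.val / 5 = j2.val / 5 := cinj hx1 hx2 (by linear_combination e3 - e2)
    have hy : (j1.val : ZMod 5) = (j2.val : ZMod 5) := by
      have hxc : ((j1.val / 5 : ℕ) : ZMod 5) = ((j2.val / 5 : ℕ) : ZMod 5) := by rw [hx]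
      linear_combination e1 + (m1 : ZMod 5) * hxc
    exact hjeq hx (cinj' hy)
  · -- both non-vertical slopes
    have hm1 : m1 < 5 := by have := i1.isLt; clear e1 e2 e3; omega
    have hm2 : m2 < 5 := by have := i2.isLt; clear e1 e2 e3; omega
    have key : ((m1 : ZMod 5) - m2) * (((j1.val / 5 : ℕ) : ZMod 5) - ((j2.val / 5 : ℕ) : ZMod 5)) = 0 := by
      linear_combination e3 - e2 - e1
    rcases mul_eq_zero.mp key with h | h
    · have hm : m1 = m2 := cinj hm1 hm2 (by linear_combination h)
      have hs : i1.val % 5 = i2.val % 5 := by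
        refine cinj' (show ((i1.val:ℕ):ZMod 5) = _ from ?_)
        have hmc : ((m1 : ℕ) : ZMod 5) = ((m2 : ℕ) : ZMod 5) := by rw [hm]
        linear_combination -e2 - ((j1.val / 5 : ℕ) : ZMod 5) * hmc
      exact hieq hm hs
    · have hx : j1.val / 5 = j2.val / 5 := cinj hx1 hx2 (by linear_combination h)
      have hy : (j1.val : ZMod 5) = (j2.val : ZMod 5) := by
        have hxc : ((j1.val / 5 : ℕ) : ZMod 5) = ((j2.val / 5 : ℕ) : ZMod 5) := by rw [hx]
        linear_combination e1 + (m1 : ZMod 5) * hxc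
      exact hjeq hx (cinj' hy)
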